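/- Lower bound for the discretized Godunov–Powell source term (estimate in the proof of Theorem 5.1): let N ≥ 1 and ω_μ > 0 (μ = 1,…,N) with Σ_μ ω_μ = 1, and let Δx, Δy, Δt > 0. For each σ ∈ {−1,+1} and μ ∈ {1,…,N}, let V_{σμ}, W_{σμ} ∈ G and ξ_{σμ}, η_{σμ} ∈ ℝ, and let β₁, β₂ ∈ ℝ satisfy β₁ ≥ |ξ_{σμ}|/(2√(ρ(V_{σμ}))) and β₂ ≥ |η_{σμ}|/(2√(ρ(W_{σμ}))) for all σ, μ. Then for all v*, B* ∈ ℝ³: Δt·Σ_{σ,μ}(ω_μ/2)( −(ξ_{σμ}/Δx)·S(V_{σμ}) − (η_{σμ}/Δy)·S(W_{σμ}) )·n*(v*,B*) ≥ Δt(v*·B*)·Σ_{σ,μ}(ω_μ/2)( ξ_{σμ}/Δx + η_{σμ}/Δy ) − (2β₁Δt/Δx)·Σ_{σ,μ}(ω_μ/2)( V_{σμ}·n*(v*,B*) + |B*|²/2 ) − (2β₂Δt/Δy)·Σ_{σ,μ}(ω_μ/2)( W_{σμ}·n*(v*,B*) + |B*|²/2 ). -/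

import Mathlib

open Finset

noncomputable section

/-- Internal energy density 𝓔(U) = E − |m|²/(2ρ) − |B|²/2 for U = (ρ,m,B,E) ∈ ℝ⁸. -/
def mhdE (U : Fin 8 → ℝ) : ℝ :=
  U 7 - (U 1 ^ 2 + U 2 ^ 2 + U 3 ^ 2) / (2 * U 0) - (U 4 ^ 2 + U 5 ^ 2 + U 6 ^ 2) / 2

/-- The admissible state set G = {U : ρ > 0 ∧ 𝓔(U) > 0}. -/
def admG : Set (Fin 8 → ℝ) := {U | 0 < U 0 ∧ 0 < mhdE U}

/-- Velocity components v = m/ρ. -/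
def vcomp (U : Fin 8 → ℝ) (i : Fin 3) : ℝ := ![U 1, U 2, U 3] i / U 0

/-- Magnetic field components. -/
def Bcomp (U : Fin 8 → ℝ) (i : Fin 3) : ℝ := ![U 4, U 5, U 6] i

/-- U · n*(v*,B*) where n*(v*,B*) = (|v*|²/2, −v*, −B*, 1). -/
def dotNstar (vs Bs : Fin 3 → ℝ) (U : Fin 8 → ℝ) : ℝ :=
  U 0 * (vs 0 ^ 2 + vs 1 ^ 2 + vs 2 ^ 2) / 2
    - (U 1 * vs 0 + U 2 * vs 1 + U 3 * vs 2)
    - (U 4 * Bs 0 + U 5 * Bs 1 + U 6 * Bs 2) + U 7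

/-- The ideal-MHD flux F_i(U;p). -/
def flux (i : Fin 3) (U : Fin 8 → ℝ) (p : ℝ) : Fin 8 → ℝ :=
  let v : Fin 3 → ℝ := fun j => ![U 1, U 2, U 3] j / U 0
  let B : Fin 3 → ℝ := ![U 4, U 5, U 6]
  let pt : ℝ := p + (B 0 ^ 2 + B 1 ^ 2 + B 2 ^ 2) / 2
  ![U 0 * v i,
    v i * U 1 - B i * B 0 + (if i = 0 then pt else 0),
    v i * U 2 - B i * B 1 + (if i = 1 then pt else 0),
    v i * U 3 - B i * B 2 + (if i = 2 then pt else 0),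
    v i * B 0 - B i * v 0,
    v i * B 1 - B i * v 1,
    v i * B 2 - B i * v 2,
    v i * (U 7 + pt) - B i * (v 0 * B 0 + v 1 * B 1 + v 2 * B 2)]

/-- 𝓒_s = p/(ρ√(2e)) with e = 𝓔(U)/ρ. -/
def Cs (U : Fin 8 → ℝ) (p : ℝ) : ℝ :=
  p / (U 0 * Real.sqrt (2 * (mhdE U / U 0)))

/-- The speed 𝓒_i(U;p). -/
def Cfast (i : Fin 3) (U : Fin 8 → ℝ) (p : ℝ) : ℝ :=
  (1 / Real.sqrt 2) *
    Real.sqrt ((U 4 ^ 2 + U 5 ^ 2 + U 6 ^ 2) / U 0 + (Cs U p) ^ 2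
      + Real.sqrt (((U 4 ^ 2 + U 5 ^ 2 + U 6 ^ 2) / U 0 + (Cs U p) ^ 2) ^ 2
          - 4 * (Bcomp U i) ^ 2 * (Cs U p) ^ 2 / U 0))

/-- The bound α_i(U,Ũ) of Lemma 2.2. -/
def alphaSpeed (i : Fin 3) (U Ut : Fin 8 → ℝ) (p pt : ℝ) : ℝ :=
  max (max (|vcomp U i| + Cfast i U p) (|vcomp Ut i| + Cfast i Ut pt))
    (|Real.sqrt (U 0) * vcomp U i + Real.sqrt (Ut 0) * vcomp Ut i|
        / (Real.sqrt (U 0) + Real.sqrt (Ut 0))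
      + max (Cfast i U p) (Cfast i Ut pt))
  + Real.sqrt ((Bcomp U 0 - Bcomp Ut 0) ^ 2 + (Bcomp U 1 - Bcomp Ut 1) ^ 2
      + (Bcomp U 2 - Bcomp Ut 2) ^ 2) / (Real.sqrt (U 0) + Real.sqrt (Ut 0))

/-- The Godunov–Powell source vector S(U) = (0, B, v, v·B). -/
def srcS (U : Fin 8 → ℝ) : Fin 8 → ℝ :=
  ![0, U 4, U 5, U 6, U 1 / U 0, U 2 / U 0, U 3 / U 0,
    (U 1 * U 4 + U 2 * U 5 + U 3 * U 6) / U 0]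

lemma absP_bound (s a0 a1 a2 b0 b1 b2 E ρ : ℝ) (hs2 : s ^ 2 = ρ) (hE : 0 < E) :
    |s * (a0 * b0 + a1 * b1 + a2 * b2)|
      ≤ E + (ρ * (a0 ^ 2 + a1 ^ 2 + a2 ^ 2) + (b0 ^ 2 + b1 ^ 2 + b2 ^ 2)) / 2 := by
  rw [abs_le]
  constructor
  · nlinarith [sq_nonneg (s * a0 + b0), sq_nonneg (s * a1 + b1), sq_nonneg (s * a2 + b2)]
  · nlinarith [sq_nonneg (s * a0 - b0), sq_nonneg (s * a1 - b1), sq_nonneg (s * a2 - b2)]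

set_option maxHeartbeats 1000000 in
lemma key_src (U : Fin 8 → ℝ) (hU : U ∈ admG) (ξ β Δx : ℝ) (hΔ : 0 < Δx)
    (hβ : |ξ| / (2 * Real.sqrt (U 0)) ≤ β) (vs Bs : Fin 3 → ℝ) :
    (ξ / Δx) * (vs 0 * Bs 0 + vs 1 * Bs 1 + vs 2 * Bs 2)
      - (2 * β / Δx) * (dotNstar vs Bs U + (Bs 0 ^ 2 + Bs 1 ^ 2 + Bs 2 ^ 2) / 2)
      ≤ -(ξ / Δx) * dotNstar vs Bs (srcS U) := by
  obtain ⟨hρ, hE⟩ := hU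
  set s := Real.sqrt (U 0) with hsdef
  have hs0 : 0 < s := Real.sqrt_pos.2 hρ
  have hs2 : s ^ 2 = U 0 := Real.sq_sqrt hρ.le
  have hξ : |ξ| ≤ 2 * β * s := by
    rw [div_le_iff₀ (by positivity)] at hβ; linarith
  have hβ0 : 0 ≤ β := le_trans (by positivity) hβ
  set a0 := U 1 / U 0 - vs 0 with ha0
  set a1 := U 2 / U 0 - vs 1 with ha1
  set a2 := U 3 / U 0 - vs 2 with ha2
  set b0 := U 4 - Bs 0 with hb0
  set b1 := U 5 - Bs 1 with hb1
  set b2 := U 6 - Bs 2 with hb2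
  have hP : dotNstar vs Bs (srcS U) + (vs 0 * Bs 0 + vs 1 * Bs 1 + vs 2 * Bs 2)
      = a0 * b0 + a1 * b1 + a2 * b2 := by
    simp only [dotNstar, show srcS U 0 = 0 from rfl, show srcS U 1 = U 4 from rfl,
      show srcS U 2 = U 5 from rfl, show srcS U 3 = U 6 from rfl,
      show srcS U 4 = U 1 / U 0 from rfl, show srcS U 5 = U 2 / U 0 from rfl,
      show srcS U 6 = U 3 / U 0 from rfl,
      show srcS U 7 = (U 1 * U 4 + U 2 * U 5 + U 3 * U 6) / U 0 from rfl,
      ha0, ha1, ha2, hb0, hb1, hb2]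
    field_simp
    ring
  have hQ : dotNstar vs Bs U + (Bs 0 ^ 2 + Bs 1 ^ 2 + Bs 2 ^ 2) / 2
      = mhdE U + (U 0 * (a0 ^ 2 + a1 ^ 2 + a2 ^ 2) + (b0 ^ 2 + b1 ^ 2 + b2 ^ 2)) / 2 := by
    simp only [dotNstar, mhdE, ha0, ha1, ha2, hb0, hb1, hb2]
    field_simp
    ring
  set P := a0 * b0 + a1 * b1 + a2 * b2 with hPd
  set Q := mhdE U + (U 0 * (a0 ^ 2 + a1 ^ 2 + a2 ^ 2) + (b0 ^ 2 + b1 ^ 2 + b2 ^ 2)) / 2 with hQd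
  have hsP : s * |P| ≤ Q := by
    have habs : |s * P| ≤ Q := by
      rw [hPd, hQd]
      exact absP_bound s a0 a1 a2 b0 b1 b2 (mhdE U) (U 0) hs2 hE
    calc s * |P| = |s * P| := by rw [abs_mul, abs_of_pos hs0]
      _ ≤ Q := habs
  have hfin : ξ * P ≤ 2 * β * Q := by
    calc ξ * P ≤ |ξ * P| := le_abs_self _
      _ = |ξ| * |P| := abs_mul _ _
      _ ≤ (2 * β * s) * |P| := mul_le_mul_of_nonneg_right hξ (abs_nonneg _)
      _ = 2 * β * (s * |P|) := by ring
      _ ≤ 2 * β * Q := mul_le_mul_of_nonneg_left hsP (by positivity)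
  have h2 : (1 / Δx) * (ξ * P) ≤ (1 / Δx) * (2 * β * Q) :=
    mul_le_mul_of_nonneg_left hfin (by positivity)
  have hdS : dotNstar vs Bs (srcS U) = P - (vs 0 * Bs 0 + vs 1 * Bs 1 + vs 2 * Bs 2) := by
    linarith [hP]
  have hdN : dotNstar vs Bs U + (Bs 0 ^ 2 + Bs 1 ^ 2 + Bs 2 ^ 2) / 2 = Q := hQ
  rw [hdS, hdN]
  have hkey : 0 ≤ (2 * β * Q - ξ * P) / Δx := div_nonneg (by linarith) hΔ.le
  have hsplit : (2 * β / Δx) * Q - (ξ / Δx) * P = (2 * β * Q - ξ * P) / Δx := by ring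
  linarith [hkey, hsplit]

lemma dotNstar_add (vs Bs : Fin 3 → ℝ) (U W : Fin 8 → ℝ) :
    dotNstar vs Bs (U + W) = dotNstar vs Bs U + dotNstar vs Bs W := by
  simp only [dotNstar, Pi.add_apply]; ring

lemma dotNstar_smul (vs Bs : Fin 3 → ℝ) (c : ℝ) (U : Fin 8 → ℝ) :
    dotNstar vs Bs (c • U) = c * dotNstar vs Bs U := by
  simp only [dotNstar, Pi.smul_apply, smul_eq_mul]; ring

lemma dotNstar_zero (vs Bs : Fin 3 → ℝ) : dotNstar vs Bs 0 = 0 := by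
  simp [dotNstar]

lemma dotNstar_sum {ι : Type*} (vs Bs : Fin 3 → ℝ) (t : Finset ι) (f : ι → Fin 8 → ℝ) :
    dotNstar vs Bs (∑ i ∈ t, f i) = ∑ i ∈ t, dotNstar vs Bs (f i) := by
  classical
  induction t using Finset.induction with
  | empty => simp [dotNstar_zero]
  | insert _ _ h ih => rw [Finset.sum_insert h, Finset.sum_insert h, dotNstar_add, ih]


set_option maxHeartbeats 1000000 in
/-- Lower bound for the discretized Godunov–Powell source term. -/
theorem source_term_lower_bound (N : ℕ) (hN : 0 < N)
    (ωg : Fin N → ℝ) (hωg : ∀ μ, 0 < ωg μ) (hωgsum : ∑ μ, ωg μ = 1)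
    (Δx Δy Δt : ℝ) (hΔx : 0 < Δx) (hΔy : 0 < Δy) (hΔt : 0 < Δt)
    (V W : Bool → Fin N → Fin 8 → ℝ) (ξ η : Bool → Fin N → ℝ)
    (hV : ∀ σ μ, V σ μ ∈ admG) (hW : ∀ σ μ, W σ μ ∈ admG)
    (β1 β2 : ℝ)
    (hβ1 : ∀ σ μ, |ξ σ μ| / (2 * Real.sqrt ((V σ μ) 0)) ≤ β1)
    (hβ2 : ∀ σ μ, |η σ μ| / (2 * Real.sqrt ((W σ μ) 0)) ≤ β2)
    (vs Bs : Fin 3 → ℝ) :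
    dotNstar vs Bs (Δt • ∑ σ : Bool, ∑ μ, (ωg μ / 2) •
        ((-(ξ σ μ / Δx)) • srcS (V σ μ) + (-(η σ μ / Δy)) • srcS (W σ μ)))
      ≥ Δt * (vs 0 * Bs 0 + vs 1 * Bs 1 + vs 2 * Bs 2)
            * ∑ σ : Bool, ∑ μ, (ωg μ / 2) * (ξ σ μ / Δx + η σ μ / Δy)
        - (2 * β1 * Δt / Δx) * ∑ σ : Bool, ∑ μ, (ωg μ / 2)
            * (dotNstar vs Bs (V σ μ) + (Bs 0 ^ 2 + Bs 1 ^ 2 + Bs 2 ^ 2) / 2)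
        - (2 * β2 * Δt / Δy) * ∑ σ : Bool, ∑ μ, (ωg μ / 2)
            * (dotNstar vs Bs (W σ μ) + (Bs 0 ^ 2 + Bs 1 ^ 2 + Bs 2 ^ 2) / 2) := by
  have hL : dotNstar vs Bs (Δt • ∑ σ : Bool, ∑ μ, (ωg μ / 2) •
        ((-(ξ σ μ / Δx)) • srcS (V σ μ) + (-(η σ μ / Δy)) • srcS (W σ μ)))
      = ∑ σ : Bool, ∑ μ, Δt * ((ωg μ / 2) *
          ((-(ξ σ μ / Δx)) * dotNstar vs Bs (srcS (V σ μ))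
            + (-(η σ μ / Δy)) * dotNstar vs Bs (srcS (W σ μ)))) := by
    rw [dotNstar_smul, dotNstar_sum, Finset.mul_sum]
    refine Finset.sum_congr rfl fun σ _ => ?_
    rw [dotNstar_sum, Finset.mul_sum]
    refine Finset.sum_congr rfl fun μ _ => ?_
    rw [dotNstar_smul, dotNstar_add, dotNstar_smul, dotNstar_smul]
  rw [hL, ge_iff_le]
  have step : ∀ σ μ,
      Δt * (vs 0 * Bs 0 + vs 1 * Bs 1 + vs 2 * Bs 2) * ((ωg μ / 2) * (ξ σ μ / Δx + η σ μ / Δy))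
        - (2 * β1 * Δt / Δx) * ((ωg μ / 2) * (dotNstar vs Bs (V σ μ) + (Bs 0 ^ 2 + Bs 1 ^ 2 + Bs 2 ^ 2) / 2))
        - (2 * β2 * Δt / Δy) * ((ωg μ / 2) * (dotNstar vs Bs (W σ μ) + (Bs 0 ^ 2 + Bs 1 ^ 2 + Bs 2 ^ 2) / 2))
      ≤ Δt * ((ωg μ / 2) *
          ((-(ξ σ μ / Δx)) * dotNstar vs Bs (srcS (V σ μ))
            + (-(η σ μ / Δy)) * dotNstar vs Bs (srcS (W σ μ)))) := by
    intro σ μ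
    have kV := key_src (V σ μ) (hV σ μ) (ξ σ μ) β1 Δx hΔx (hβ1 σ μ) vs Bs
    have kW := key_src (W σ μ) (hW σ μ) (η σ μ) β2 Δy hΔy (hβ2 σ μ) vs Bs
    have hc : (0:ℝ) ≤ Δt * (ωg μ / 2) := by
      have := (hωg μ).le; positivity
    rw [← sub_nonneg]
    have hnn : (0:ℝ) ≤ Δt * (ωg μ / 2) *
        ((-(ξ σ μ / Δx) * dotNstar vs Bs (srcS (V σ μ))
            + -(η σ μ / Δy) * dotNstar vs Bs (srcS (W σ μ)))
          - ((ξ σ μ / Δx * (vs 0 * Bs 0 + vs 1 * Bs 1 + vs 2 * Bs 2) -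
                2 * β1 / Δx * (dotNstar vs Bs (V σ μ) + (Bs 0 ^ 2 + Bs 1 ^ 2 + Bs 2 ^ 2) / 2))
              + (η σ μ / Δy * (vs 0 * Bs 0 + vs 1 * Bs 1 + vs 2 * Bs 2) -
                2 * β2 / Δy * (dotNstar vs Bs (W σ μ) + (Bs 0 ^ 2 + Bs 1 ^ 2 + Bs 2 ^ 2) / 2)))) :=
      mul_nonneg hc (by linarith)
    calc (0:ℝ) ≤ _ := hnn
      _ = _ := by ring
  calc
    Δt * (vs 0 * Bs 0 + vs 1 * Bs 1 + vs 2 * Bs 2) * (∑ σ : Bool, ∑ μ, (ωg μ / 2) * (ξ σ μ / Δx + η σ μ / Δy))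
        - (2 * β1 * Δt / Δx) * ∑ σ : Bool, ∑ μ, (ωg μ / 2) * (dotNstar vs Bs (V σ μ) + (Bs 0 ^ 2 + Bs 1 ^ 2 + Bs 2 ^ 2) / 2)
        - (2 * β2 * Δt / Δy) * ∑ σ : Bool, ∑ μ, (ωg μ / 2) * (dotNstar vs Bs (W σ μ) + (Bs 0 ^ 2 + Bs 1 ^ 2 + Bs 2 ^ 2) / 2)
      = ∑ σ : Bool, ∑ μ,
          (Δt * (vs 0 * Bs 0 + vs 1 * Bs 1 + vs 2 * Bs 2) * ((ωg μ / 2) * (ξ σ μ / Δx + η σ μ / Δy))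
            - (2 * β1 * Δt / Δx) * ((ωg μ / 2) * (dotNstar vs Bs (V σ μ) + (Bs 0 ^ 2 + Bs 1 ^ 2 + Bs 2 ^ 2) / 2))
            - (2 * β2 * Δt / Δy) * ((ωg μ / 2) * (dotNstar vs Bs (W σ μ) + (Bs 0 ^ 2 + Bs 1 ^ 2 + Bs 2 ^ 2) / 2))) := by
        simp only [Finset.mul_sum, ← Finset.sum_sub_distrib]
    _ ≤ ∑ σ : Bool, ∑ μ, Δt * ((ωg μ / 2) *
          ((-(ξ σ μ / Δx)) * dotNstar vs Bs (srcS (V σ μ))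
            + (-(η σ μ / Δy)) * dotNstar vs Bs (srcS (W σ μ)))) :=
        Finset.sum_le_sum fun σ _ => Finset.sum_le_sum fun μ _ => step σ μ
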